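/- Factor product is associative and commutative, with neutral element the empty factor (∅, the constant-1 function). Moreover: (1) for all sets of variables V, W and every factor φ, Σ_V (Σ_W φ) = Σ_{V∪W} φ; and (2) for all factors φ, ψ and every set of variables V with var(ψ) ∩ V = ∅, Σ_V (φ ⊙ ψ) = (Σ_V φ) ⊙ ψ. -/

import Mathlib

/-!
Factors over a set of typed variables `V`, each variable `v` having a finite web `Web v`.
A factor `φ` is a pair of a finite set `φ.vars` of variables together with a function from
the assignments of the variables in `φ.vars` to the nonnegative reals.  We encode the
function as a function on *total* assignments `(∀ v, Web v) → ℝ≥0` which only depends on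
the values of the variables in `φ.vars` (field `depends`); this is equivalent to a function
on `∏_{v ∈ vars} Web v`.
-/

noncomputable section

/-- A factor: a finite set of variables together with a function from assignments of those
variables to `ℝ≥0`. -/
structure Factor (V : Type) (Web : V → Type) where
  vars : Finset V
  fn : (∀ v, Web v) → NNReal
  depends : ∀ ρ ρ' : (∀ v, Web v), (∀ v ∈ vars, ρ v = ρ' v) → fn ρ = fn ρ'

namespace Factor

variable {V : Type} [DecidableEq V] {Web : V → Type} [∀ v, Fintype (Web v)]

/-- Override an assignment `ρ` on the variables of `s` by the partial assignment `b`. -/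
def envOverride (ρ : ∀ v, Web v) (s : Finset V) (b : ∀ v : ↥s, Web v.1) : ∀ v, Web v :=
  fun v => if h : v ∈ s then b ⟨v, h⟩ else ρ v

/-- Summing-out `Σ_W φ`: the factor on `φ.vars \ W` given by
`(Σ_W φ)(a) = Σ_{b ∈ ⟦W ∩ var φ⟧} φ(a ⊎ b)`. -/
def sumOut (φ : Factor V Web) (W : Finset V) : Factor V Web where
  vars := φ.vars \ W
  fn ρ := ∑ b : (∀ v : ↥(φ.vars ∩ W), Web v.1), φ.fn (envOverride ρ (φ.vars ∩ W) b)
  depends := by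
    intro ρ ρ' h
    refine Finset.sum_congr rfl (fun b _ => ?_)
    refine φ.depends _ _ (fun v hv => ?_)
    by_cases hvs : v ∈ φ.vars ∩ W
    · simp [envOverride, hvs]
    · have hv1 : v ∈ φ.vars \ W := by
        rw [Finset.mem_sdiff]
        refine ⟨hv, fun hw => hvs (Finset.mem_inter.2 ⟨hv, hw⟩)⟩
      simp only [envOverride, hvs, dite_false, dif_neg]
      exact h v hv1

/-- Product of factors: `(φ ⊙ ψ)(c) = φ(c|_{var φ}) · ψ(c|_{var ψ})`. -/
def prod (φ ψ : Factor V Web) : Factor V Web where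
  vars := φ.vars ∪ ψ.vars
  fn ρ := φ.fn ρ * ψ.fn ρ
  depends := fun ρ ρ' h => by
    try simp only
    rw [φ.depends ρ ρ' (fun v hv => h v (Finset.mem_union_left _ hv)),
      ψ.depends ρ ρ' (fun v hv => h v (Finset.mem_union_right _ hv))]

/-- The empty factor `(∅, constant 1)`. -/
def one (V : Type) (Web : V → Type) : Factor V Web :=
  ⟨∅, fun _ => 1, fun _ _ _ => rfl⟩

end Factor


namespace Factor

variable {V : Type} [DecidableEq V] {Web : V → Type} [∀ v, Fintype (Web v)]

lemma ext' {φ ψ : Factor V Web} (h1 : φ.vars = ψ.vars) (h2 : φ.fn = ψ.fn) : φ = ψ := by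
  cases φ; cases ψ; cases h1; cases h2; rfl

lemma envOverride_eq_updateFinset (ρ : ∀ v, Web v) (s : Finset V) (b : ∀ v : ↥s, Web v.1) :
    envOverride ρ s b = Function.updateFinset ρ s b := rfl

lemma sum_env_congr (φ : Factor V Web) (ρ : ∀ v, Web v) {s t : Finset V} (h : s = t) :
    (∑ b : (∀ v : ↥s, Web v.1), φ.fn (envOverride ρ s b)) =
      ∑ b : (∀ v : ↥t, Web v.1), φ.fn (envOverride ρ t b) := by subst h; rfl

end Factor

/-- Factor product is associative and commutative, with neutral element the
empty factor `(∅, 1)`.  Moreover (1) `Σ_A (Σ_B φ) = Σ_{A ∪ B} φ` and (2)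
`Σ_A (φ ⊙ ψ) = (Σ_A φ) ⊙ ψ` whenever `var ψ ∩ A = ∅`. -/
theorem factor_prod_assoc_comm_one_sumOut
    {V : Type} [DecidableEq V] {Web : V → Type} [∀ v, Fintype (Web v)] :
    (∀ φ ψ χ : Factor V Web, (φ.prod ψ).prod χ = φ.prod (ψ.prod χ)) ∧
    (∀ φ ψ : Factor V Web, φ.prod ψ = ψ.prod φ) ∧
    (∀ φ : Factor V Web, φ.prod (Factor.one V Web) = φ ∧ (Factor.one V Web).prod φ = φ) ∧
    (∀ (A B : Finset V) (φ : Factor V Web), (φ.sumOut B).sumOut A = φ.sumOut (A ∪ B)) ∧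
    (∀ (φ ψ : Factor V Web) (A : Finset V), ψ.vars ∩ A = ∅ →
      (φ.prod ψ).sumOut A = (φ.sumOut A).prod ψ) := by
  refine ⟨?_, ?_, ?_, ?_, ?_⟩
  · intro φ ψ χ
    exact Factor.ext' (Finset.union_assoc _ _ _) (by funext ρ; exact mul_assoc _ _ _)
  · intro φ ψ
    exact Factor.ext' (Finset.union_comm _ _) (by funext ρ; exact mul_comm _ _)
  · intro φ
    constructor
    · exact Factor.ext' (Finset.union_empty _) (by funext ρ; exact mul_one _)
    · exact Factor.ext' (Finset.empty_union _) (by funext ρ; exact one_mul _)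
  · intro A B φ
    have hvars : (φ.vars \ B) \ A = φ.vars \ (A ∪ B) := by
      ext v; simp only [Finset.mem_sdiff, Finset.mem_union]; tauto
    refine Factor.ext' hvars ?_
    funext ρ
    show (∑ a : (∀ v : ↥((φ.sumOut B).vars ∩ A), Web v.1),
        (φ.sumOut B).fn (Factor.envOverride ρ _ a)) = _
    set S₁ : Finset V := (φ.vars \ B) ∩ A with hS₁
    set S₂ : Finset V := φ.vars ∩ B with hS₂
    have hdisj : Disjoint S₁ S₂ := by
      rw [Finset.disjoint_left]
      intro v hv1 hv2
      exact (Finset.mem_sdiff.1 (Finset.mem_inter.1 hv1).1).2 (Finset.mem_inter.1 hv2).2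
    have hunion : S₁ ∪ S₂ = φ.vars ∩ (A ∪ B) := by
      ext v
      simp only [hS₁, hS₂, Finset.mem_union, Finset.mem_inter, Finset.mem_sdiff]
      tauto
    have key : ∀ (a : ∀ v : ↥S₁, Web v.1) (b : ∀ v : ↥S₂, Web v.1),
        φ.fn (Factor.envOverride (Factor.envOverride ρ S₁ a) S₂ b) =
        φ.fn (Factor.envOverride ρ (S₁ ∪ S₂) (Equiv.piFinsetUnion _ hdisj ⟨a, b⟩)) := by
      intro a b
      simp only [Factor.envOverride_eq_updateFinset]
      rw [Function.updateFinset_updateFinset hdisj]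
    calc (∑ a : (∀ v : ↥S₁, Web v.1), (φ.sumOut B).fn (Factor.envOverride ρ S₁ a))
        = ∑ a : (∀ v : ↥S₁, Web v.1), ∑ b : (∀ v : ↥S₂, Web v.1),
            φ.fn (Factor.envOverride (Factor.envOverride ρ S₁ a) S₂ b) := rfl
      _ = ∑ p : (∀ v : ↥S₁, Web v.1) × (∀ v : ↥S₂, Web v.1),
            φ.fn (Factor.envOverride ρ (S₁ ∪ S₂) (Equiv.piFinsetUnion _ hdisj p)) := by
            rw [Fintype.sum_prod_type]
            exact Finset.sum_congr rfl fun a _ => Finset.sum_congr rfl fun b _ => key a b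
      _ = ∑ c : (∀ v : ↥(S₁ ∪ S₂), Web v.1), φ.fn (Factor.envOverride ρ (S₁ ∪ S₂) c) :=
            Fintype.sum_equiv (Equiv.piFinsetUnion _ hdisj) _ _ (fun p => rfl)
      _ = ∑ c : (∀ v : ↥(φ.vars ∩ (A ∪ B)), Web v.1),
            φ.fn (Factor.envOverride ρ (φ.vars ∩ (A ∪ B)) c) :=
            φ.sum_env_congr ρ hunion
  · intro φ ψ A hA
    have hψA : Disjoint ψ.vars A := Finset.disjoint_iff_inter_eq_empty.2 hA
    have hvars : (φ.vars ∪ ψ.vars) \ A = (φ.vars \ A) ∪ ψ.vars := by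
      rw [Finset.union_sdiff_distrib, (Finset.sdiff_eq_self_iff_disjoint).2 hψA]
    refine Factor.ext' hvars ?_
    funext ρ
    have hidx : (φ.vars ∪ ψ.vars) ∩ A = φ.vars ∩ A := by
      rw [Finset.union_inter_distrib_right, hA, Finset.union_empty]
    show (∑ b : (∀ v : ↥((φ.vars ∪ ψ.vars) ∩ A), Web v.1),
        (φ.prod ψ).fn (Factor.envOverride ρ _ b)) = _
    calc (∑ b : (∀ v : ↥((φ.vars ∪ ψ.vars) ∩ A), Web v.1),
            (φ.prod ψ).fn (Factor.envOverride ρ ((φ.vars ∪ ψ.vars) ∩ A) b))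
        = ∑ b : (∀ v : ↥(φ.vars ∩ A), Web v.1),
            (φ.prod ψ).fn (Factor.envOverride ρ (φ.vars ∩ A) b) :=
            (φ.prod ψ).sum_env_congr ρ hidx
      _ = ∑ b : (∀ v : ↥(φ.vars ∩ A), Web v.1),
            φ.fn (Factor.envOverride ρ (φ.vars ∩ A) b) * ψ.fn ρ := by
            refine Finset.sum_congr rfl fun b _ => ?_
            show φ.fn _ * ψ.fn _ = _
            congr 1
            refine ψ.depends _ _ fun v hv => ?_
            have hvA : v ∉ φ.vars ∩ A := fun h =>
              Finset.disjoint_left.1 hψA hv (Finset.mem_inter.1 h).2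
            simp [Factor.envOverride, hvA]
      _ = (∑ b : (∀ v : ↥(φ.vars ∩ A), Web v.1),
            φ.fn (Factor.envOverride ρ (φ.vars ∩ A) b)) * ψ.fn ρ := by
            rw [Finset.sum_mul]
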